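/- Let K be an infinite field and let A' = (α_{mn})_{1≤m≤M, 1≤n≤N} be an M×N matrix with entries in T such that every square matrix M_{U₁,…,U_N;V₁,…,V_M}(A') with U₁+⋯+U_N = V₁+⋯+V_M is nonsingular. Then there exist entries α_{1,N+1},…,α_{M,N+1} ∈ T such that the M×(N+1) matrix A obtained by appending this column to A' has the same property: every square matrix M_{U₁,…,U_{N+1};V₁,…,V_M}(A) with U₁+⋯+U_{N+1} = V₁+⋯+V_M is nonsingular. -/

import Mathlib

open scoped BigOperators Classical

noncomputable section

variable {K : Type*} [Field K]

/-- `x` as an element of `L = K((x⁻¹))`, realized as the Laurent series in `t = x⁻¹`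
supported at the single exponent `-1`. -/
def xL (K : Type*) [Field K] : LaurentSeries K := HahnSeries.single (-1 : ℤ) 1

/-- The embedding of the polynomial ring `K[x]` into `L = K((x⁻¹))`. -/
def toL (P : Polynomial K) : LaurentSeries K := Polynomial.aeval (xL K) P

/-- The absolute value on `L`: `|0| = 0` and `|F| = e^M` where `M` is the degree in `x`
of the leading term of `F` (i.e. `M = -(order of F as a series in t = x⁻¹)`). -/
def absL (F : LaurentSeries K) : ℝ := if F = 0 then 0 else Real.exp (-(F.order : ℝ))

/-- `‖F‖`, the distance from `F` to the nearest polynomial in `x`. -/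
def normL (F : LaurentSeries K) : ℝ :=
  sInf { r : ℝ | ∃ P : Polynomial K, r = absL (F - toL P) }

/-- The solution space `V(U₁,…,U_N; V₁,…,V_M)` of the system
`|ξ_n| < e^{U_n}` and `‖∑_n α_{mn} ξ_n‖ < e^{-V_m}`. -/
def VSet {M N : ℕ} (A : Matrix (Fin M) (Fin N) (LaurentSeries K))
    (U : Fin N → ℕ) (V : Fin M → ℕ) : Set (Fin N → Polynomial K) :=
  { ξ | (∀ n, absL (toL (ξ n)) < Real.exp (U n)) ∧
        (∀ m, normL (∑ n, A m n * toL (ξ n)) < Real.exp (-(V m : ℝ))) }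

/-- `dim V(U₁,…,U_N; V₁,…,V_M)` as a `K`-vector space. -/
def dimV {M N : ℕ} (A : Matrix (Fin M) (Fin N) (LaurentSeries K))
    (U : Fin N → ℕ) (V : Fin M → ℕ) : ℕ :=
  Module.finrank K (Submodule.span K (VSet A U V))

/-- An `M × N` matrix with entries in `T = L/K[x]` is strongly badly approximable if
there is `C₁ > 0` with `e^{-C₁} < (∏_m ‖∑_n α_{mn} ξ_n‖) (∏_n max(|ξ_n|,1))`
for all nonzero `ξ ∈ K[x]^N`. -/
def StronglyBadlyApproximable {M N : ℕ}
    (A : Matrix (Fin M) (Fin N) (LaurentSeries K)) : Prop :=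
  ∃ C₁ : ℝ, 0 < C₁ ∧ ∀ ξ : Fin N → Polynomial K, ξ ≠ 0 →
    Real.exp (-C₁) <
      (∏ m, normL (∑ n, A m n * toL (ξ n))) * (∏ n, max (absL (toL (ξ n))) 1)

/-- The `V × U` Hankel matrix `M_{U;V}(α)` with `(i,j)` entry `a_{i+j-1}` (1-indexed),
where `a_i` is the coefficient of `x^{-i}` in `α`. -/
def hankel (α : LaurentSeries K) (U V : ℕ) : Matrix (Fin V) (Fin U) K :=
  Matrix.of fun i j => α.coeff ((i : ℤ) + (j : ℤ) + 1)

/-- The block matrix `M_{U₁,…,U_N; V₁,…,V_M}(A)` whose `(m,n)` block is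
`M_{U_n; V_m}(α_{mn})`. -/
def blockM {M N : ℕ} (A : Matrix (Fin M) (Fin N) (LaurentSeries K))
    (U : Fin N → ℕ) (V : Fin M → ℕ) :
    Matrix ((m : Fin M) × Fin (V m)) ((n : Fin N) × Fin (U n)) K :=
  Matrix.of fun i j => hankel (A i.1 j.1) (U j.1) (V i.1) i.2 j.2


/-! ### Auxiliary development -/

section Aux

variable {K : Type*} [Field K]




lemma sq_rank_iff {ι : Type*} [Fintype ι] [DecidableEq ι]
    (B : Matrix ι ι K) : B.rank = Fintype.card ι ↔ B.det ≠ 0 := by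
  constructor
  · intro hr
    have hsurj : Function.Surjective B.mulVecLin := by
      rw [← LinearMap.range_eq_top]
      apply Submodule.eq_top_of_finrank_eq
      rw [← Matrix.rank, hr, Module.finrank_pi]
    have : IsUnit B := Matrix.mulVec_surjective_iff_isUnit.mp hsurj
    have := (Matrix.isUnit_iff_isUnit_det B).mp this
    exact this.ne_zero
  · intro hd
    exact Matrix.rank_of_isUnit B ((Matrix.isUnit_iff_isUnit_det B).mpr (isUnit_iff_ne_zero.mpr hd))


lemma rank_reindex_rect {ρ γ ρ' γ' : Type*} [Fintype γ] [Fintype γ']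
    (e₁ : ρ ≃ ρ') (e₂ : γ ≃ γ') (A : Matrix ρ γ K) :
    (Matrix.reindex e₁ e₂ A).rank = A.rank := by
  rw [Matrix.rank, Matrix.rank, Matrix.mulVecLin_reindex, LinearMap.range_comp,
    LinearMap.range_comp, LinearEquiv.range, Submodule.map_top, LinearEquiv.finrank_map_eq]

lemma rank_submatrix_rect {ρ γ ρ' γ' : Type*} [Fintype γ] [Fintype γ']
    (B : Matrix ρ γ K) (e₁ : ρ' ≃ ρ) (e₂ : γ' ≃ γ) :
    (B.submatrix e₁ e₂).rank = B.rank := by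
  have : B.submatrix e₁ e₂ = Matrix.reindex e₁.symm e₂.symm B := rfl
  rw [this, rank_reindex_rect]

/-- Rectangular rank-equals-width iff a squared-up determinant is nonzero. -/
lemma rank_eq_iff_det_ne_zero {ρ γ : Type*} [Fintype ρ] [Fintype γ] [DecidableEq γ]
    (B : Matrix ρ γ K) (e : ρ ≃ γ) :
    B.rank = Fintype.card γ ↔ (B.submatrix e.symm id).det ≠ 0 := by
  rw [← sq_rank_iff, show B.submatrix e.symm id = B.submatrix e.symm (Equiv.refl γ) from rfl,
    rank_submatrix_rect]

lemma det_submatrix_eq_zero_iff {ι κ : Type*} [Fintype ι] [DecidableEq ι]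
    [Fintype κ] [DecidableEq κ] (A : Matrix ι ι K) (e f : κ ≃ ι) :
    (A.submatrix e f).det = 0 ↔ A.det = 0 := by
  have h1 : A.submatrix e f = (A.submatrix e e).submatrix id (f.trans e.symm) := by
    ext i j; simp [Matrix.submatrix_apply]
  rw [h1, show ((A.submatrix e e).submatrix id (f.trans e.symm))
      = (A.submatrix e e).submatrix id ((f.trans e.symm : Equiv.Perm κ)) from rfl,
    Matrix.det_permute', Matrix.det_submatrix_equiv_self]
  constructor
  · intro hz
    rcases mul_eq_zero.mp hz with hs | h
    · exfalso
      rcases Int.units_eq_one_or (Equiv.Perm.sign (f.trans e.symm)) with h1 | h1 <;>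
        rw [h1] at hs <;> simp at hs
    · exact h
  · intro hz; rw [hz, mul_zero]

lemma det_updateColumn_single_eq_zero_iff {ι ι' : Type*} [Fintype ι] [DecidableEq ι]
    [Fintype ι'] [DecidableEq ι'] (B : Matrix ι ι K) (r c : ι) (Bm : Matrix ι' ι' K)
    (u w : ι' → ι) (hu : Function.Injective u) (hw : Function.Injective w)
    (hur : ∀ x, u x ≠ r) (hwc : ∀ x, w x ≠ c)
    (hcard : Fintype.card ι = Fintype.card ι' + 1)
    (hB : ∀ x y, B (u x) (w y) = Bm x y) :
    (B.updateCol c (Pi.single r 1)).det = 0 ↔ Bm.det = 0 := by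
  have hbij : ∀ (z : ι) (v : ι' → ι), Function.Injective v → (∀ x, v x ≠ z) →
      Function.Bijective (fun o => Option.elim o z v) := by
    intro z v hv hvz
    rw [Fintype.bijective_iff_injective_and_card]
    constructor
    · intro o1 o2
      cases o1 <;> cases o2 <;> simp_all
      · intro h; exact absurd h.symm (hvz _)
      · exact fun h => hv h
    · simp [hcard]
  let eR : Option ι' ≃ ι := Equiv.ofBijective _ (hbij r u hu hur)
  let eC : Option ι' ≃ ι := Equiv.ofBijective _ (hbij c w hw hwc)
  let e3 : (Unit ⊕ ι') ≃ Option ι' :=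
    (Equiv.sumComm Unit ι').trans (Equiv.optionEquivSumPUnit ι').symm
  have key : ((B.updateCol c (Pi.single r 1)).submatrix eR eC).submatrix e3 e3 =
      Matrix.fromBlocks (Matrix.of fun _ _ => (1 : K)) (Matrix.of fun _ y => B r (w y)) 0 Bm := by
    ext i j
    rcases i with i | x <;> rcases j with j | y <;>
      simp [eR, eC, e3, Matrix.updateCol_apply, hwc, hur, Pi.single_apply, hB]
  have h1 : (B.updateCol c (Pi.single r 1)).det = 0 ↔
      (((B.updateCol c (Pi.single r 1)).submatrix eR eC).submatrix e3 e3).det = 0 := by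
    rw [Matrix.det_submatrix_equiv_self e3, det_submatrix_eq_zero_iff]
  rw [h1, key, Matrix.det_fromBlocks_zero₂₁]
  simp [Matrix.det_unique]

lemma det_updateColumn_add_sum {ι μ : Type*} [Fintype ι] [DecidableEq ι]
    (B : Matrix ι ι K) (c : ι) (v : ι → K) (s : Finset μ) (t : μ → K) (r : μ → ι) :
    (B.updateCol c (v + ∑ m ∈ s, t m • (Pi.single (r m) 1 : ι → K))).det
      = (B.updateCol c v).det + ∑ m ∈ s, t m * (B.updateCol c ((Pi.single (r m) 1 : ι → K))).det := by
  classical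
  induction s using Finset.induction_on with
  | empty => simp
  | insert a s hna ih =>
    rw [Finset.sum_insert hna, Finset.sum_insert hna,
      show v + (t a • (Pi.single (r a) 1 : ι → K) + ∑ m ∈ s, t m • (Pi.single (r m) 1 : ι → K))
        = (v + ∑ m ∈ s, t m • (Pi.single (r m) 1 : ι → K)) + t a • (Pi.single (r a) 1 : ι → K) by ring_nf,
      Matrix.det_updateCol_add, ih, Matrix.det_updateCol_smul]
    ring


/-- The Laurent series with coefficient `f n` at exponent `n ≥ 0`. -/
def ser (f : ℕ → K) : LaurentSeries K := HahnSeries.ofPowerSeries ℤ K (PowerSeries.mk f)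

lemma ser_coeff (f : ℕ → K) (n : ℕ) : (ser f).coeff (n : ℤ) = f n := by
  simp [ser, HahnSeries.ofPowerSeries_apply_coeff]

variable {M N : ℕ}

/-- The augmented matrix. -/
def aug (A' : Matrix (Fin M) (Fin N) (LaurentSeries K)) (a : Fin M → ℕ → K) :
    Matrix (Fin M) (Fin (N + 1)) (LaurentSeries K) :=
  Matrix.of fun (m : Fin M) (n : Fin (N + 1)) =>
    Fin.snoc (α := fun _ => LaurentSeries K) (A' m) (ser (a m)) n

/-- The nonsingularity predicate. -/
def Pred (A' : Matrix (Fin M) (Fin N) (LaurentSeries K)) (a : Fin M → ℕ → K)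
    (U : Fin (N + 1) → ℕ) (V : Fin M → ℕ) : Prop :=
  (blockM (aug A' a) U V).rank = ∑ n, U n

lemma card_sigma_fin {q : ℕ} (W : Fin q → ℕ) :
    Fintype.card ((i : Fin q) × Fin (W i)) = ∑ i, W i := by
  simp [Fintype.card_sigma]

lemma blockM_apply {M' N' : ℕ} (A : Matrix (Fin M') (Fin N') (LaurentSeries K))
    (U : Fin N' → ℕ) (V : Fin M' → ℕ) (i : (m : Fin M') × Fin (V m))
    (j : (n : Fin N') × Fin (U n)) :
    blockM A U V i j = (A i.1 j.1).coeff ((i.2 : ℤ) + (j.2 : ℤ) + 1) := rfl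

lemma aug_castSucc (A' : Matrix (Fin M) (Fin N) (LaurentSeries K)) (a : Fin M → ℕ → K)
    (m : Fin M) (n : Fin N) : aug A' a m n.castSucc = A' m n := by
  simp [aug, Matrix.of_apply, Fin.snoc_castSucc]

lemma aug_last (A' : Matrix (Fin M) (Fin N) (LaurentSeries K)) (a : Fin M → ℕ → K)
    (m : Fin M) : aug A' a m (Fin.last N) = ser (a m) := by
  simp [aug, Matrix.of_apply, Fin.snoc_last]

/-- Entries of the augmented block matrix only depend on coefficients below
`V m + U last`. -/
lemma blockM_aug_congr (A' : Matrix (Fin M) (Fin N) (LaurentSeries K))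
    (a b : Fin M → ℕ → K) (U : Fin (N + 1) → ℕ) (V : Fin M → ℕ) (k : ℕ)
    (hab : ∀ m i, i < k → a m i = b m i)
    (hV : ∀ m, V m + U (Fin.last N) ≤ k) :
    blockM (aug A' a) U V = blockM (aug A' b) U V := by
  ext ⟨m, i⟩ ⟨n, j⟩
  rw [blockM_apply, blockM_apply]
  induction n using Fin.lastCases with
  | last =>
      rw [aug_last, aug_last]
      have : ((i : ℤ) + (j : ℤ) + 1) = (((i : ℕ) + (j : ℕ) + 1 : ℕ) : ℤ) := by push_cast; ring
      rw [this, ser_coeff, ser_coeff]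
      exact hab m _ (by have := i.isLt; have := j.isLt; have := hV m; omega)
  | cast n => rw [aug_castSucc, aug_castSucc]

/-- The case `U (last) = 0`: reduces to the hypothesis on `A'`. -/
lemma pred_of_last_eq_zero (A' : Matrix (Fin M) (Fin N) (LaurentSeries K))
    (h : ∀ (U : Fin N → ℕ) (V : Fin M → ℕ), (∑ n, U n) = (∑ m, V m) →
      (blockM A' U V).rank = ∑ n, U n)
    (a : Fin M → ℕ → K) (U : Fin (N + 1) → ℕ) (V : Fin M → ℕ)
    (hUV : (∑ n, U n) = (∑ m, V m)) (hU0 : U (Fin.last N) = 0) :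
    Pred A' a U V := by
  classical
  set U' : Fin N → ℕ := fun n => U n.castSucc with hU'
  have hsum : (∑ n, U n) = ∑ n, U' n := by
    rw [Fin.sum_univ_castSucc, hU0, add_zero]
  have hbij : Function.Bijective
      (fun (p : (n : Fin N) × Fin (U' n)) => (⟨p.1.castSucc, p.2⟩ : (n : Fin (N+1)) × Fin (U n))) := by
    rw [Fintype.bijective_iff_injective_and_card]
    constructor
    · rintro ⟨n, jn⟩ ⟨n', jn'⟩ hp
      have h1 : n.castSucc = n'.castSucc := congrArg Sigma.fst hp
      have h2 : n = n' := Fin.castSucc_injective _ h1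
      subst h2
      simpa using hp
    · rw [card_sigma_fin, card_sigma_fin, hsum]
  set eN := Equiv.ofBijective _ hbij
  have hent : (blockM (aug A' a) U V).submatrix (Equiv.refl _) eN = blockM A' U' V := by
    ext ⟨m, i⟩ ⟨n, j⟩
    rw [Matrix.submatrix_apply]
    show blockM (aug A' a) U V ⟨m, i⟩ ⟨n.castSucc, j⟩ = _
    rw [blockM_apply, blockM_apply, aug_castSucc]
  have := rank_submatrix_rect (blockM (aug A' a) U V) (Equiv.refl _) eN
  rw [hent] at this
  rw [Pred, ← this, h U' V (by rw [← hsum, hUV]), hsum]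

end Aux


section Aux2

variable {K : Type*} [Field K] {M N : ℕ}

lemma sigma_fin_ext {q : ℕ} {W : Fin q → ℕ} {x y : (i : Fin q) × Fin (W i)}
    (h1 : x.1 = y.1) (h2 : (x.2 : ℕ) = (y.2 : ℕ)) : x = y := by
  obtain ⟨a, b⟩ := x
  obtain ⟨a', b'⟩ := y
  dsimp at h1
  subst h1
  dsimp at h2
  cases Fin.ext h2
  rfl

lemma sum_update_sub_one {q : ℕ} (W : Fin q → ℕ) (i : Fin q) (hW : 1 ≤ W i) :
    (∑ j, Function.update W i (W i - 1) j) + 1 = ∑ j, W j := by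
  rw [Finset.sum_update_of_mem (Finset.mem_univ i)]
  rw [Finset.sum_eq_sum_sdiff_singleton_add (Finset.mem_univ i) W]
  omega

lemma update_le_sup {q : ℕ} (W : Fin q → ℕ) (i : Fin q) (v : ℕ) (hv : v ≤ W i) (j : Fin q) :
    Function.update W i v j ≤ W j := by
  by_cases hj : j = i
  · subst hj; rw [Function.update_self]; exact hv
  · rw [Function.update_of_ne hj]

/-- The stage-`k` property: all nonsingularity constraints genuinely involving the
last column, of stage at most `k`, hold. -/
def Phi (A' : Matrix (Fin M) (Fin N) (LaurentSeries K)) (a : Fin M → ℕ → K) (k : ℕ) : Prop :=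
  ∀ (U : Fin (N + 1) → ℕ) (V : Fin M → ℕ), (∑ n, U n) = (∑ m, V m) →
    1 ≤ U (Fin.last N) → Finset.univ.sup V + U (Fin.last N) ≤ k → Pred A' a U V

lemma phi_congr (A' : Matrix (Fin M) (Fin N) (LaurentSeries K)) (a b : Fin M → ℕ → K) (k : ℕ)
    (hab : ∀ m i, i < k → a m i = b m i) (hk : Phi A' a k) : Phi A' b k := by
  intro U V hUV hU1 hstage
  have := hk U V hUV hU1 hstage
  rwa [Pred, blockM_aug_congr A' a b U V k hab
    (fun m => le_trans (by have := Finset.le_sup (f := V) (Finset.mem_univ m); omega) hstage)] at this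

end Aux2


section Key

variable {K : Type*} [Field K] {M N : ℕ}

lemma key_lemma (A' : Matrix (Fin M) (Fin N) (LaurentSeries K))
    (h : ∀ (U : Fin N → ℕ) (V : Fin M → ℕ), (∑ n, U n) = (∑ m, V m) →
      (blockM A' U V).rank = ∑ n, U n)
    (a : Fin M → ℕ → K) (k : ℕ) (hphi : Phi A' a k)
    (U : Fin (N + 1) → ℕ) (V : Fin M → ℕ) (hUV : (∑ n, U n) = (∑ m, V m))
    (hU1 : 1 ≤ U (Fin.last N)) (hst : Finset.univ.sup V + U (Fin.last N) = k + 1) :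
    ∃ p : Polynomial K, p ≠ 0 ∧ ∀ s : K,
      (Pred A' (fun m i => if i = k then s ^ ((m : ℕ) + 1) else a m i) U V ↔
        Polynomial.eval s p ≠ 0) := by
  classical
  set Ul := U (Fin.last N) with hUl
  set sV := Finset.univ.sup V with hsVdef
  have hUge : 1 ≤ ∑ n, U n :=
    le_trans hU1 (Finset.single_le_sum (f := U) (fun _ _ => Nat.zero_le _) (Finset.mem_univ _))
  have hVex : ∃ m, 1 ≤ V m := by
    by_contra hc
    push_neg at hc
    have : (∑ m, V m) = 0 := Finset.sum_eq_zero (fun m _ => by have := hc m; omega)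
    omega
  obtain ⟨mw, hmw⟩ := hVex
  have hsV1 : 1 ≤ sV := le_trans hmw (Finset.le_sup (Finset.mem_univ mw))
  have hVsup : ∀ m, V m ≤ sV := fun m => Finset.le_sup (Finset.mem_univ m)
  have hcard : Fintype.card ((m : Fin M) × Fin (V m)) =
      Fintype.card ((n : Fin (N + 1)) × Fin (U n)) := by
    rw [card_sigma_fin, card_sigma_fin, hUV]
  set e : ((m : Fin M) × Fin (V m)) ≃ ((n : Fin (N + 1)) × Fin (U n)) :=
    Fintype.equivOfCardEq hcard with hedef
  set Bsq : (Fin M → ℕ → K) → Matrix ((n : Fin (N + 1)) × Fin (U n))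
      ((n : Fin (N + 1)) × Fin (U n)) K :=
    fun b => (blockM (aug A' b) U V).submatrix e.symm _root_.id with hBsqdef
  have hsq : ∀ b, Pred A' b U V ↔ (Bsq b).det ≠ 0 := by
    intro b
    rw [Pred, show (∑ n, U n) = Fintype.card ((n : Fin (N + 1)) × Fin (U n)) from
      (card_sigma_fin U).symm]
    exact rank_eq_iff_det_ne_zero _ e
  set S : Finset (Fin M) := Finset.univ.filter (fun m => V m = sV) with hSdef
  have hSmem : ∀ m : Fin M, m ∈ S → V m = sV := fun m hm => (Finset.mem_filter.mp hm).2
  have hVS : ∀ m : {x // x ∈ S}, 1 ≤ V m.1 := fun m => by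
    have := hSmem m.1 m.2; omega
  set rr : {x // x ∈ S} → ((m' : Fin M) × Fin (V m')) :=
    fun m => ⟨m.1, ⟨V m.1 - 1, by have := hVS m; omega⟩⟩ with hrrdef
  set cc : ((n : Fin (N + 1)) × Fin (U n)) := ⟨Fin.last N, ⟨Ul - 1, by omega⟩⟩ with hccdef
  set a0 : Fin M → ℕ → K := fun m i => if i = k then 0 else a m i with ha0def
  set B0 := Bsq a0 with hB0def
  set rg : {x // x ∈ S} → ((n : Fin (N + 1)) × Fin (U n)) := fun m => e (rr m) with hrgdef
  set cof : {x // x ∈ S} → K :=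
    fun m => (B0.updateCol cc (Pi.single (rg m) 1)).det with hcofdef
  set p : Polynomial K :=
    Polynomial.C B0.det + ∑ m : {x // x ∈ S}, Polynomial.C (cof m) *
      Polynomial.X ^ ((m.1 : ℕ) + 1) with hpdef
  -- Claim A : evaluation
  have claimA : ∀ s : K,
      (Bsq (fun m i => if i = k then s ^ ((m : ℕ) + 1) else a m i)).det = p.eval s := by
    intro s
    set as : Fin M → ℕ → K := fun m i => if i = k then s ^ ((m : ℕ) + 1) else a m i
      with hasdef
    have hoff : ∀ (z : (m' : Fin M) × Fin (V m')) (j : (n : Fin (N + 1)) × Fin (U n)),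
        j ≠ cc → blockM (aug A' as) U V z j = blockM (aug A' a0) U V z j := by
      rintro ⟨mz, iz⟩ ⟨n, jn⟩ hj
      rw [blockM_apply, blockM_apply]
      rcases Fin.eq_castSucc_or_eq_last n with ⟨n', rfl⟩ | hn
      · rw [aug_castSucc, aug_castSucc]
      · subst hn
        have hjn : (jn : ℕ) ≠ Ul - 1 := by
          intro hv
          exact hj (sigma_fin_ext rfl (by rw [hccdef]; exact hv))
        rw [aug_last, aug_last]
        have hcast : ((iz : ℤ) + (jn : ℤ) + 1) = (((iz : ℕ) + (jn : ℕ) + 1 : ℕ) : ℤ) := by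
          push_cast; ring
        rw [hcast, ser_coeff, ser_coeff]
        have hne : (iz : ℕ) + (jn : ℕ) + 1 ≠ k := by
          have h1 := iz.isLt
          have h2 := jn.isLt
          have h3 := hVsup mz
          omega
        rw [hasdef, ha0def]
        simp only [if_neg hne]
    have hcol : ∀ (z : (m' : Fin M) × Fin (V m')),
        blockM (aug A' as) U V z cc = blockM (aug A' a0) U V z cc
          + ∑ m : {x // x ∈ S}, s ^ ((m.1 : ℕ) + 1) * (if z = rr m then 1 else 0) := by
      rintro ⟨mz, iz⟩
      rw [blockM_apply, blockM_apply]
      simp only [hccdef]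
      rw [aug_last, aug_last]
      rw [show ((iz : ℤ) + ((Ul - 1 : ℕ) : ℤ) + 1) = (((iz : ℕ) + Ul : ℕ) : ℤ) by
        push_cast; omega]
      rw [ser_coeff, ser_coeff]
      by_cases hcor : (iz : ℕ) = sV - 1
      · have hVmz : V mz = sV := by
          have h1 := iz.isLt
          have h2 := hVsup mz
          omega
        have hmzS : mz ∈ S := by rw [hSdef]; simp [hVmz]
        have hidx : (iz : ℕ) + Ul = k := by omega
        rw [hasdef, ha0def]
        simp only [if_pos hidx]
        rw [Finset.sum_eq_single (⟨mz, hmzS⟩ : {x // x ∈ S})]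
        · have hEq : (⟨mz, iz⟩ : (m' : Fin M) × Fin (V m')) = rr ⟨mz, hmzS⟩ :=
            sigma_fin_ext rfl (by show (iz : ℕ) = V mz - 1; omega)
          rw [if_pos hEq]
          ring
        · intro b _ hb
          rw [if_neg, mul_zero]
          intro heq
          have h1 : mz = (b : Fin M) := congrArg Sigma.fst heq
          exact hb (Subtype.ext h1.symm)
        · intro hmem; exact absurd (Finset.mem_univ _) hmem
      · have hidx : (iz : ℕ) + Ul ≠ k := by
          have h1 := iz.isLt
          have h2 := hVsup mz
          omega
        rw [hasdef, ha0def]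
        simp only [if_neg hidx]
        rw [Finset.sum_eq_zero, add_zero]
        intro b _
        rw [if_neg, mul_zero]
        intro heq
        have h2 : (iz : ℕ) = V (b : Fin M) - 1 :=
          congrArg (fun (q : (m' : Fin M) × Fin (V m')) => ((q.2 : ℕ))) heq
        have h3 := hSmem b.1 b.2
        have h4 := hVS b
        omega
    have hmat : Bsq as = B0.updateCol cc
        ((fun i => B0 i cc) + ∑ m : {x // x ∈ S},
          s ^ ((m.1 : ℕ) + 1) • (Pi.single (rg m) 1 : _ → K)) := by
      ext i j
      by_cases hj : j = cc
      · subst hj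
        rw [Matrix.updateCol_apply, if_pos rfl]
        show blockM (aug A' as) U V (e.symm i) cc = _
        rw [hcol (e.symm i)]
        congr 1
        rw [Finset.sum_apply]
        apply Finset.sum_congr rfl
        intro m _
        rw [Pi.smul_apply, Pi.single_apply, smul_eq_mul]
        congr 1
        by_cases hieq : e.symm i = rr m
        · rw [if_pos hieq, if_pos (show i = rg m by
            show i = e (rr m); rw [← hieq, Equiv.apply_symm_apply])]
        · rw [if_neg hieq, if_neg (show ¬ i = rg m from fun hh => hieq (by
            rw [hh]; exact Equiv.symm_apply_apply e (rr m)))]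
      · rw [Matrix.updateCol_apply, if_neg hj]
        show blockM (aug A' as) U V (e.symm i) j = blockM (aug A' a0) U V (e.symm i) j
        exact hoff _ _ hj
    rw [hmat, det_updateColumn_add_sum, Matrix.updateCol_eq_self]
    rw [hpdef]
    rw [Polynomial.eval_add, Polynomial.eval_C, Polynomial.eval_finset_sum]
    congr 1
    apply Finset.sum_congr rfl
    intro m _
    rw [Polynomial.eval_mul, Polynomial.eval_C, Polynomial.eval_pow, Polynomial.eval_X]
    ring
  -- Claim B : the relevant cofactor is nonzero
  have claimB : ∀ m : {x // x ∈ S}, cof m ≠ 0 := by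
    intro m1
    set U' : Fin (N + 1) → ℕ := Function.update U (Fin.last N) (Ul - 1) with hU'def
    set V' : Fin M → ℕ := Function.update V m1.1 (V m1.1 - 1) with hV'def
    have hVm1 : V m1.1 = sV := hSmem m1.1 m1.2
    have hU'last : U' (Fin.last N) = Ul - 1 := Function.update_self _ _ _
    have hV'm1 : V' m1.1 = V m1.1 - 1 := Function.update_self _ _ _
    have hUle : ∀ n, U' n ≤ U n := update_le_sup U (Fin.last N) (Ul - 1) (by omega)
    have hVle : ∀ m', V' m' ≤ V m' := update_le_sup V m1.1 (V m1.1 - 1) (by omega)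
    have hsumU : (∑ n, U' n) + 1 = ∑ n, U n := sum_update_sub_one U (Fin.last N) hU1
    have hsumV : (∑ m', V' m') + 1 = ∑ m', V m' := sum_update_sub_one V m1.1 (by omega)
    have hUV' : (∑ n, U' n) = ∑ m', V' m' := by omega
    have hphi0 : Phi A' a0 k := phi_congr A' a a0 k
      (fun m i hik => by rw [ha0def]; simp only; rw [if_neg (by omega)]) hphi
    have hpred0 : Pred A' a0 U' V' := by
      by_cases hU'0 : U' (Fin.last N) = 0
      · exact pred_of_last_eq_zero A' h a0 U' V' hUV' hU'0
      · refine hphi0 U' V' hUV' (by omega) ?_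
        have h1 : Finset.univ.sup V' ≤ sV := by
          rw [hsVdef]
          exact Finset.sup_mono_fun (fun b _ => hVle b)
        omega
    have hcard' : Fintype.card ((m' : Fin M) × Fin (V' m')) =
        Fintype.card ((n : Fin (N + 1)) × Fin (U' n)) := by
      rw [card_sigma_fin, card_sigma_fin, hUV']
    set e' : ((m' : Fin M) × Fin (V' m')) ≃ ((n : Fin (N + 1)) × Fin (U' n)) :=
      Fintype.equivOfCardEq hcard' with he'def
    set Bm : Matrix ((n : Fin (N + 1)) × Fin (U' n)) ((n : Fin (N + 1)) × Fin (U' n)) K :=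
      (blockM (aug A' a0) U' V').submatrix e'.symm _root_.id with hBmdef
    have hdetm : Bm.det ≠ 0 := by
      refine (rank_eq_iff_det_ne_zero (blockM (aug A' a0) U' V') e').mp ?_
      rw [card_sigma_fin]
      exact hpred0
    set u : ((n : Fin (N + 1)) × Fin (U' n)) → ((n : Fin (N + 1)) × Fin (U n)) :=
      fun x => e ⟨(e'.symm x).1, Fin.castLE (hVle (e'.symm x).1) (e'.symm x).2⟩ with hudef
    set w : ((n : Fin (N + 1)) × Fin (U' n)) → ((n : Fin (N + 1)) × Fin (U n)) :=
      fun y => ⟨y.1, Fin.castLE (hUle y.1) y.2⟩ with hwdef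
    have hu : Function.Injective u := by
      intro x y hxy
      have h0 := e.injective hxy
      have h1 := congrArg Sigma.fst h0
      have h2 := congrArg (fun (q : (m' : Fin M) × Fin (V m')) => (q.2 : ℕ)) h0
      exact e'.symm.injective (sigma_fin_ext h1 h2)
    have hw : Function.Injective w := by
      intro x y hxy
      have h1 := congrArg Sigma.fst hxy
      have h2 := congrArg (fun (q : (n : Fin (N + 1)) × Fin (U n)) => (q.2 : ℕ)) hxy
      exact sigma_fin_ext h1 h2
    have hur : ∀ x, u x ≠ rg m1 := by
      intro x heq
      have h0 := e.injective heq
      have h1' := congrArg Sigma.fst h0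
      have h1 : (e'.symm x).1 = m1.1 := h1'
      have h2' := congrArg (fun (q : (m' : Fin M) × Fin (V m')) => (q.2 : ℕ)) h0
      have h2 : ((e'.symm x).2 : ℕ) = V m1.1 - 1 := h2'
      have h3 : ((e'.symm x).2 : ℕ) < V' (e'.symm x).1 := (e'.symm x).2.isLt
      have h5 : V' (e'.symm x).1 = V' m1.1 := congrArg V' h1
      omega
    have hwc : ∀ y, w y ≠ cc := by
      intro y heq
      have h1' := congrArg Sigma.fst heq
      have h1 : y.1 = Fin.last N := h1'
      have h2' := congrArg (fun (q : (n : Fin (N + 1)) × Fin (U n)) => (q.2 : ℕ)) heq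
      have h2 : (y.2 : ℕ) = Ul - 1 := h2'
      have h3 : (y.2 : ℕ) < U' y.1 := y.2.isLt
      have h5 : U' y.1 = U' (Fin.last N) := congrArg U' h1
      omega
    have hcard2 : Fintype.card ((n : Fin (N + 1)) × Fin (U n)) =
        Fintype.card ((n : Fin (N + 1)) × Fin (U' n)) + 1 := by
      rw [card_sigma_fin, card_sigma_fin]
      omega
    have hB : ∀ x y, B0 (u x) (w y) = Bm x y := by
      intro x y
      show blockM (aug A' a0) U V (e.symm (e _)) (w y) = blockM (aug A' a0) U' V' (e'.symm x) y
      rw [Equiv.symm_apply_apply]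
      rfl
    have hiff := det_updateColumn_single_eq_zero_iff B0 (rg m1) cc Bm u w hu hw hur hwc hcard2 hB
    intro h0
    exact hdetm (hiff.mp h0)
  have hpne : p ≠ 0 := by
    obtain ⟨m1, hm1V⟩ : ∃ m, V m = sV := by
      have : Nonempty (Fin M) := ⟨mw⟩
      obtain ⟨b, -, hb⟩ := Finset.exists_mem_eq_sup Finset.univ Finset.univ_nonempty V
      exact ⟨b, hb.symm⟩
    have hm1S : m1 ∈ S := by rw [hSdef]; simp [hm1V]
    intro hp0
    have hco : p.coeff ((m1 : ℕ) + 1) = cof ⟨m1, hm1S⟩ := by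
      rw [hpdef]
      rw [Polynomial.coeff_add, Polynomial.coeff_C, if_neg (by omega)]
      rw [Polynomial.finset_sum_coeff]
      rw [Finset.sum_eq_single (⟨m1, hm1S⟩ : {x // x ∈ S})]
      · simp
      · intro b _ hb
        rw [Polynomial.coeff_C_mul, Polynomial.coeff_X_pow, if_neg, mul_zero]
        intro hbb
        apply hb
        have : b.1 = m1 := Fin.ext (by omega)
        exact Subtype.ext this
      · intro hmem
        exact absurd (Finset.mem_univ _) hmem
    rw [hp0] at hco
    exact claimB ⟨m1, hm1S⟩ (by rw [← hco]; simp)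
  refine ⟨p, hpne, fun s => ?_⟩
  rw [hsq, claimA]

end Key


section Step

variable {K : Type*} [Field K] {M N : ℕ}

lemma phi_zero (A' : Matrix (Fin M) (Fin N) (LaurentSeries K)) (a : Fin M → ℕ → K) :
    Phi A' a 0 := by
  intro U V _ hU1 hstage
  omega

lemma step_lemma [Infinite K] (A' : Matrix (Fin M) (Fin N) (LaurentSeries K))
    (h : ∀ (U : Fin N → ℕ) (V : Fin M → ℕ), (∑ n, U n) = (∑ m, V m) →
      (blockM A' U V).rank = ∑ n, U n)
    (a : Fin M → ℕ → K) (k : ℕ) (hphi : Phi A' a k) :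
    ∃ a' : Fin M → ℕ → K, (∀ m i, i < k → a' m i = a m i) ∧ Phi A' a' (k + 1) := by
  classical
  set C : Set ((Fin (N + 1) → ℕ) × (Fin M → ℕ)) :=
    {uv | (∑ n, uv.1 n) = (∑ m, uv.2 m) ∧ 1 ≤ uv.1 (Fin.last N) ∧
      Finset.univ.sup uv.2 + uv.1 (Fin.last N) = k + 1} with hCdef
  have hCfin : C.Finite := by
    apply Set.Finite.subset (Set.Finite.prod
      (Set.Finite.pi (fun _ : Fin (N + 1) => Set.finite_Iic ((k + 1) * (M + 1))))
      (Set.Finite.pi (fun _ : Fin M => Set.finite_Iic (k + 1))))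
    rintro ⟨U, V⟩ ⟨h1, h2, h3⟩
    dsimp only at h1 h2 h3 ⊢
    have hVb : ∀ m, V m ≤ k + 1 := fun m =>
      le_trans (Finset.le_sup (Finset.mem_univ m)) (by omega)
    have hsumV : (∑ m, V m) ≤ M * (k + 1) := by
      calc (∑ m, V m) ≤ ∑ _m : Fin M, (k + 1) :=
            Finset.sum_le_sum (fun m _ => hVb m)
        _ = M * (k + 1) := by simp [Finset.sum_const, mul_comm]
    have hUb : ∀ n, U n ≤ (k + 1) * (M + 1) := by
      intro n
      have h4 : U n ≤ ∑ n', U n' :=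
        Finset.single_le_sum (f := U) (fun _ _ => Nat.zero_le _) (Finset.mem_univ n)
      have h5 : M * (k + 1) ≤ (k + 1) * (M + 1) := by nlinarith
      omega
    constructor
    · intro n _
      exact Set.mem_Iic.mpr (hUb n)
    · intro m _
      exact Set.mem_Iic.mpr (hVb m)
  have hkey : ∀ uv : {x // x ∈ hCfin.toFinset}, ∃ p : Polynomial K, p ≠ 0 ∧ ∀ s : K,
      (Pred A' (fun m i => if i = k then s ^ ((m : ℕ) + 1) else a m i) uv.1.1 uv.1.2 ↔
        Polynomial.eval s p ≠ 0) := by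
    intro ⟨⟨U, V⟩, huv⟩
    rw [Set.Finite.mem_toFinset] at huv
    obtain ⟨h1, h2, h3⟩ := huv
    exact key_lemma A' h a k hphi U V h1 h2 h3
  choose P hP1 hP2 using hkey
  have hq : (∏ uv : {x // x ∈ hCfin.toFinset}, P uv) ≠ 0 :=
    Finset.prod_ne_zero_iff.mpr (fun uv _ => hP1 uv)
  obtain ⟨s, hs⟩ : ∃ s : K, Polynomial.eval s (∏ uv : {x // x ∈ hCfin.toFinset}, P uv) ≠ 0 := by
    obtain ⟨s, hs⟩ := (Polynomial.finite_setOf_isRoot hq).infinite_compl.nonempty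
    exact ⟨s, hs⟩
  refine ⟨fun m i => if i = k then s ^ ((m : ℕ) + 1) else a m i,
    fun m i hik => if_neg (by omega), ?_⟩
  intro U V hUV hU1 hstage
  by_cases hst : Finset.univ.sup V + U (Fin.last N) ≤ k
  · exact phi_congr A' a _ k (fun m i hik => (if_neg (by omega)).symm) hphi U V hUV hU1 hst
  · have hstageq : Finset.univ.sup V + U (Fin.last N) = k + 1 := by omega
    have hmemC : (U, V) ∈ hCfin.toFinset := by
      rw [Set.Finite.mem_toFinset]
      exact ⟨hUV, hU1, hstageq⟩
    refine (hP2 ⟨(U, V), hmemC⟩ s).mpr ?_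
    intro h0
    apply hs
    rw [Polynomial.eval_prod]
    exact Finset.prod_eq_zero (Finset.mem_univ (⟨(U, V), hmemC⟩ : {x // x ∈ hCfin.toFinset})) h0

end Step

/-- if `K` is infinite and every square matrix
`M_{U₁,…,U_N;V₁,…,V_M}(A')` with `U₁+⋯+U_N = V₁+⋯+V_M` is nonsingular, then one can
append a column `(α_{1,N+1},…,α_{M,N+1})` to `A'` so that the resulting `M × (N+1)`
matrix `A` has the same property. -/
theorem append_column_preserving_nonsingularity
    {K : Type*} [Field K] [Infinite K] {M N : ℕ}
    (A' : Matrix (Fin M) (Fin N) (LaurentSeries K))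
    (h : ∀ (U : Fin N → ℕ) (V : Fin M → ℕ), (∑ n, U n) = (∑ m, V m) →
      (blockM A' U V).rank = ∑ n, U n) :
    ∃ c : Fin M → LaurentSeries K,
      ∀ (U : Fin (N + 1) → ℕ) (V : Fin M → ℕ), (∑ n, U n) = (∑ m, V m) →
        (blockM
          (Matrix.of fun (m : Fin M) (n : Fin (N + 1)) =>
            Fin.snoc (α := fun _ => LaurentSeries K) (A' m) (c m) n : Matrix (Fin M) (Fin (N + 1)) (LaurentSeries K))
          U V).rank = ∑ n, U n := by
  classical
  have hstep : ∀ (k : ℕ) (x : {a : Fin M → ℕ → K // Phi A' a k}),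
      ∃ a' : Fin M → ℕ → K, (∀ m i, i < k → a' m i = x.1 m i) ∧ Phi A' a' (k + 1) :=
    fun k x => step_lemma A' h x.1 k x.2
  let seq : ∀ k : ℕ, {a : Fin M → ℕ → K // Phi A' a k} := fun k =>
    Nat.rec (⟨fun _ _ => 0, phi_zero A' _⟩ : {a : Fin M → ℕ → K // Phi A' a 0})
      (fun k prev => ⟨Classical.choose (hstep k prev),
        (Classical.choose_spec (hstep k prev)).2⟩) k
  have hcoh : ∀ (k : ℕ) (m : Fin M) (i : ℕ), i < k → (seq (k + 1)).1 m i = (seq k).1 m i :=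
    fun k m i hik => (Classical.choose_spec (hstep k (seq k))).1 m i hik
  set af : Fin M → ℕ → K := fun m i => (seq (i + 1)).1 m i with hafdef
  have hagree : ∀ (k : ℕ) (m : Fin M) (i : ℕ), i < k → af m i = (seq k).1 m i := by
    intro k
    induction k with
    | zero => intro m i hik; omega
    | succ k ih =>
      intro m i hik
      by_cases hi : i < k
      · rw [hcoh k m i hi]; exact ih m i hi
      · have hieq : i = k := by omega
        subst hieq
        rfl
  have hphiall : ∀ k : ℕ, Phi A' af k := fun k =>
    phi_congr A' (seq k).1 af k (fun m i hik => (hagree k m i hik).symm) (seq k).2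
  refine ⟨fun m => ser (af m), ?_⟩
  intro U V hUV
  have hpred : Pred A' af U V := by
    by_cases hU0 : U (Fin.last N) = 0
    · exact pred_of_last_eq_zero A' h af U V hUV hU0
    · exact hphiall (Finset.univ.sup V + U (Fin.last N)) U V hUV (by omega) le_rfl
  exact hpred
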